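/- Let G be a connected simple graph on a finite nonempty vertex type V whose diameter equals 3h + z, where h, z ∈ ℕ and z ≤ 2. Let s ≥ 1, and suppose N : V → Finset V assigns to each vertex v a set N(v) of s closest vertices to v. Let S ⊆ V satisfy S ∩ N(v) ≠ ∅ for every v ∈ V, and let w ∈ V maximize d_N(w) := max_{x∈N(w)} dist(w,x) over all vertices. Then there exists a vertex x ∈ S ∪ {w} ∪ N(w) such that ecc(x) ≥ 2h + z if z ∈ {0,1}, and ecc(x) ≥ 2h + 1 if z = 2. -/

import Mathlib

/-- The eccentricity of a vertex `v`: the largest distance from `v` to a vertex of the graph. -/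
noncomputable def SimpleGraph.ecc {V : Type*} [Fintype V] (G : SimpleGraph V) (v : V) : ℕ :=
  Finset.univ.sup (G.dist v)

private lemma dist_le_ecc {V : Type*} [Fintype V] (G : SimpleGraph V) (u v : V) :
    G.dist u v ≤ G.ecc u :=
  Finset.le_sup (Finset.mem_univ v)

/-- On a shortest path from `u` to `v`, for every `k ≤ dist u v` there is a vertex `c`
at distance exactly `k` from `u` and `dist u v - k` from `v`. -/
private lemma acim_exists_between {V : Type*} {G : SimpleGraph V} (hG : G.Connected) (u v : V) :
    ∀ k : ℕ, k ≤ G.dist u v → ∃ c : V, G.dist u c = k ∧ G.dist c v + k = G.dist u v := by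
  intro k
  induction k with
  | zero => intro _; exact ⟨u, by simp⟩
  | succ k ih =>
    intro hk
    obtain ⟨c, hc1, hc2⟩ := ih (le_trans (Nat.le_succ k) hk)
    have hcv : G.dist c v ≠ 0 := by omega
    obtain ⟨p, hp⟩ := SimpleGraph.exists_walk_of_dist_ne_zero hcv
    have hpnil : ¬ p.Nil := by
      rw [SimpleGraph.Walk.not_nil_iff_lt_length]
      omega
    have hadj : G.Adj c (p.getVert 1) := by simpa using p.adj_getVert_succ (i := 0) (by rw [SimpleGraph.Walk.not_nil_iff_lt_length] at hpnil; omega)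
    have hone : G.dist c (p.getVert 1) = 1 := SimpleGraph.dist_eq_one_iff_adj.mpr hadj
    have h1 : G.dist u (p.getVert 1) ≤ G.dist u c + G.dist c (p.getVert 1) := hG.dist_triangle
    have h2 : G.dist (p.getVert 1) v ≤ p.tail.length := SimpleGraph.dist_le p.tail
    have hlen : p.tail.length + 1 = p.length := p.length_tail_add_one hpnil
    have h3 : G.dist u v ≤ G.dist u (p.getVert 1) + G.dist (p.getVert 1) v := hG.dist_triangle
    exact ⟨p.getVert 1, by omega, by omega⟩

theorem aingworth_estimate {V : Type*} [Fintype V] [Nonempty V]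
    (G : SimpleGraph V) (hG : G.Connected) (h z s : ℕ) (hz : z ≤ 2) (hs : 1 ≤ s)
    (hdiam : G.diam = 3 * h + z)
    (N : V → Finset V) (hNcard : ∀ v : V, (N v).card = s)
    (hNclosest : ∀ v : V, ∀ x ∈ N v, ∀ y ∉ N v, G.dist v x ≤ G.dist v y)
    (S : Finset V) (hS : ∀ v : V, ∃ p ∈ S, p ∈ N v)
    (w : V) (hw : ∀ u : V, (N u).sup (G.dist u) ≤ (N w).sup (G.dist w)) :
    ∃ x : V, (x ∈ S ∨ x = w ∨ x ∈ N w) ∧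
      (z ≤ 1 → 2 * h + z ≤ G.ecc x) ∧ (z = 2 → 2 * h + 1 ≤ G.ecc x) := by
  obtain ⟨a, b, hab⟩ := G.exists_dist_eq_diam
  rw [hdiam] at hab
  set T : ℕ := 2 * h + min z 1 with hT
  suffices H : ∃ x : V, (x ∈ S ∨ x = w ∨ x ∈ N w) ∧ T ≤ G.ecc x by
    obtain ⟨x, hx1, hx2⟩ := H
    exact ⟨x, hx1, fun hz1 => by omega, fun hz2 => by omega⟩
  by_cases hcase : (N w).sup (G.dist w) ≤ h
  · -- Case 1: d_N(w) ≤ h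
    obtain ⟨p, hpS, hpN⟩ := hS a
    have h1 : G.dist a p ≤ h := le_trans (le_trans (Finset.le_sup hpN) (hw a)) hcase
    have h2 : G.dist a b ≤ G.dist a p + G.dist p b := hG.dist_triangle
    have h3 : G.dist p b ≤ G.ecc p := dist_le_ecc G p b
    exact ⟨p, Or.inl hpS, by omega⟩
  · -- Case 2: d_N(w) ≥ h + 1
    push_neg at hcase
    by_cases hwa : T ≤ G.dist w a
    · exact ⟨w, Or.inr (Or.inl rfl), le_trans hwa (dist_le_ecc G w a)⟩
    by_cases hwb : T ≤ G.dist w b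
    · exact ⟨w, Or.inr (Or.inl rfl), le_trans hwb (dist_le_ecc G w b)⟩
    push_neg at hwa hwb
    have htri : G.dist a b ≤ G.dist a w + G.dist w b := hG.dist_triangle
    have hcomm : G.dist a w = G.dist w a := SimpleGraph.dist_comm
    have hha : h ≤ G.dist w a := by omega
    obtain ⟨c, hc1, hc2⟩ := acim_exists_between hG w a h hha
    have hcN : c ∈ N w := by
      by_contra hc
      have : (N w).sup (G.dist w) ≤ G.dist w c :=
        Finset.sup_le fun x hx => hNclosest w x hx c hc
      omega
    have h4 : G.dist a b ≤ G.dist a c + G.dist c b := hG.dist_triangle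
    have h5 : G.dist a c = G.dist c a := SimpleGraph.dist_comm
    have h6 : G.dist c b ≤ G.ecc c := dist_le_ecc G c b
    exact ⟨c, Or.inr (Or.inr hcN), by omega⟩
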